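/- Let p be a prime and K a finite separable field extension of the rational function field F_p(x). Let D be a derivation on K such that D(x) = 1, where x denotes the image in K of the variable of F_p(x) (D is then the unique extension to K of the derivation d/dx). Then the field of constants of D is exactly the set of p-th powers: for f ∈ K, D(f) = 0 if and only if there exists g ∈ K with f = g^p. -/

import Mathlib

/-- Let `p` be a prime and `K` a finite separable field extension of `𝔽_p(x)`. Let `D`
be a derivation on `K` (an additive map satisfying the Leibniz rule) with `D(x) = 1`,
where `x` is the image in `K` of the variable of `𝔽_p(x)` (so `D` is the unique extension
of `d/dx` to `K`). Then the field of constants of `D` is exactly the set of `p`-th powers: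
for `f ∈ K`, `D(f) = 0` if and only if `f = g^p` for some `g ∈ K`. -/
theorem constants_eq_pth_powers
    (p : ℕ) [Fact p.Prime] (K : Type*) [Field K]
    [Algebra (RatFunc (ZMod p)) K]
    [FiniteDimensional (RatFunc (ZMod p)) K]
    [Algebra.IsSeparable (RatFunc (ZMod p)) K]
    (D : K → K)
    (hadd : ∀ u v : K, D (u + v) = D u + D v)
    (hleib : ∀ u v : K, D (u * v) = u * D v + v * D u)
    (hx : D (algebraMap (RatFunc (ZMod p)) K RatFunc.X) = 1) :
    ∀ f : K, D f = 0 ↔ ∃ g : K, f = g ^ p := by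
  have hp : p.Prime := Fact.out
  have hp0 : p ≠ 0 := hp.ne_zero
  set F := RatFunc (ZMod p)
  set x : K := algebraMap F K RatFunc.X with hxdef
  have hcharF : CharP F p := charP_of_injective_algebraMap' (ZMod p) (A := F) p
  have hchar : CharP K p := charP_of_injective_ringHom (algebraMap F K).injective p
  -- basic derivation facts
  have hD1 : D 1 = 0 := by
    have := hleib 1 1
    simp only [mul_one, one_mul] at this
    exact (add_eq_right.mp this.symm)
  have hDpow : ∀ (g : K) (n : ℕ), D (g ^ (n + 1)) = (n + 1 : ℕ) * g ^ n * D g := by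
    intro g n
    induction n with
    | zero => simp
    | succ n ih =>
      have : g ^ (n + 2) = g * g ^ (n + 1) := by ring
      rw [this, hleib, ih]
      push_cast
      ring
  have hDp : ∀ g : K, D (g ^ p) = 0 := by
    intro g
    obtain ⟨n, rfl⟩ : ∃ n, p = n + 1 := ⟨p - 1, (Nat.succ_pred_eq_of_pos hp.pos).symm⟩
    rw [hDpow]
    have : ((n + 1 : ℕ) : K) = 0 := by
      exact_mod_cast CharP.cast_eq_zero K (n + 1)
    rw [this]; ring
  -- the subfield of p-th powers
  have hfrob : ∀ g : K, frobenius K p g = g ^ p := fun g => rfl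
  set P : Subfield K := (frobenius K p).fieldRange with hPdef
  have hmemP : ∀ a : K, a ∈ P ↔ ∃ g : K, g ^ p = a := by
    intro a
    constructor
    · rintro ⟨g, rfl⟩; exact ⟨g, rfl⟩
    · rintro ⟨g, rfl⟩; exact ⟨g, rfl⟩
  have hDP : ∀ a : K, a ∈ P → D a = 0 := by
    rintro a ha
    obtain ⟨g, rfl⟩ := (hmemP a).1 ha
    exact hDp g
  have hxP : x ∉ P := by
    intro h
    rw [hDP x h] at hx
    exact zero_ne_one hx
  -- the minimal polynomial of x over P
  have hxpP : x ^ p ∈ P := (hmemP _).2 ⟨x, rfl⟩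
  set xp : P := ⟨x ^ p, hxpP⟩ with hxpdef
  set m : Polynomial P := Polynomial.X ^ p - Polynomial.C xp with hmdef
  have hm_monic : m.Monic := Polynomial.monic_X_pow_sub_C xp hp0
  have hm_aeval : Polynomial.aeval x m = 0 := by
    have : (algebraMap (↥P) K) xp = x ^ p := rfl
    simp [hmdef, this]
  have hm_irr : Irreducible m := by
    apply X_pow_sub_C_irreducible_of_prime hp
    intro b hb
    apply hxP
    have hb' : (b : K) ^ p = x ^ p := by
      have := congrArg (Subfield.subtype P) hb
      simpa using this
    obtain ⟨g, hg⟩ := (hmemP (b : K)).1 b.2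
    have : (g ^ p - x) ^ p = 0 := by
      rw [sub_pow_char, ← pow_mul, mul_comm p p, pow_mul, hg, hb', sub_self]
    exact (hmemP x).2 ⟨g, sub_eq_zero.mp ((pow_eq_zero_iff hp0).1 this)⟩
  have hmin : minpoly P x = m :=
    (minpoly.eq_of_irreducible_of_monic hm_irr hm_aeval hm_monic).symm
  have hmdeg : (minpoly P x).natDegree = p := by
    rw [hmin, hmdef]
    exact Polynomial.natDegree_X_pow_sub_C
  have hint : IsIntegral P x := ⟨m, hm_monic, hm_aeval⟩
  -- the intermediate field P(x)
  set E2 : IntermediateField P K := IntermediateField.adjoin P {x} with hE2def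
  have hxE2 : x ∈ E2 := IntermediateField.mem_adjoin_simple_self P x
  have hPE2 : ∀ a : K, a ∈ P → a ∈ E2.toSubfield := fun a ha => E2.algebraMap_mem ⟨a, ha⟩
  -- the image of F is contained in E2
  have hiota : ∀ r : F, algebraMap F K r ∈ E2.toSubfield := by
    have hpoly : ∀ q : Polynomial (ZMod p),
        algebraMap F K (algebraMap (Polynomial (ZMod p)) F q) ∈ E2.toSubfield := by
      intro q
      induction q using Polynomial.induction_on' with
      | add f g hf hg => rw [map_add, map_add]; exact add_mem hf hg
      | monomial n c =>
        rw [← Polynomial.C_mul_X_pow_eq_monomial, map_mul, map_mul, map_pow, map_pow]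
        apply mul_mem
        · have hc : (Polynomial.C c : Polynomial (ZMod p)) = ((c.val : ℕ) : Polynomial (ZMod p)) := by
            rw [← map_natCast (Polynomial.C (R := ZMod p)) c.val, ZMod.natCast_rightInverse c]
          rw [hc, map_natCast, map_natCast]
          exact natCast_mem E2.toSubfield c.val
        · have hX : algebraMap (Polynomial (ZMod p)) F Polynomial.X = RatFunc.X := rfl
          rw [hX, ← hxdef]
          exact pow_mem hxE2 n
    intro r
    rw [← RatFunc.num_div_denom r, map_div₀]
    exact div_mem (hpoly _) (hpoly _)
  set E2' : IntermediateField F K := Subfield.toIntermediateField E2.toSubfield hiota with hE2'def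
  have hmemE2' : ∀ a : K, a ∈ E2' ↔ a ∈ E2 := fun a => Iff.rfl
  haveI : CharP E2' p := (algebraMap E2' K).charP (algebraMap E2' K).injective p
  haveI : IsPurelyInseparable E2' K := by
    rw [isPurelyInseparable_iff_pow_mem E2' p]
    intro f
    refine ⟨1, ⟨⟨f ^ p ^ 1, ?_⟩, rfl⟩⟩
    rw [pow_one]
    exact (hmemE2' _).2 (hPE2 _ ((hmemP _).2 ⟨f, rfl⟩))
  have hall : ∀ f : K, f ∈ E2 := by
    intro f
    obtain ⟨y, hy⟩ := IsPurelyInseparable.surjective_algebraMap_of_isSeparable E2' K f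
    have : f ∈ E2' := hy ▸ y.2
    exact (hmemE2' f).1 this
  -- final computation
  have hD0 : D 0 = 0 := by
    have := hadd 0 0
    simp only [add_zero] at this
    exact (add_eq_right.mp this.symm)
  have hDsum : ∀ (n : ℕ) (t : ℕ → K), D (∑ i ∈ Finset.range n, t i)
      = ∑ i ∈ Finset.range n, D (t i) := by
    intro n t
    induction n with
    | zero => simpa using hD0
    | succ n ih => rw [Finset.sum_range_succ, hadd, ih, Finset.sum_range_succ]
  have hDterm : ∀ (c : K), c ∈ P → ∀ z : K, D (c * z) = c * D z := by
    intro c hc z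
    rw [hleib, hDP c hc, mul_zero, add_zero]
  have hadj : E2.toSubalgebra = Algebra.adjoin (↥P) {x} :=
    IntermediateField.adjoin_simple_toSubalgebra_of_isAlgebraic hint.isAlgebraic
  have hli : LinearIndependent (↥P) fun i : Fin p => x ^ (i : ℕ) := by
    rw [← hmdeg]
    exact linearIndependent_pow x
  intro f
  constructor
  swap
  · rintro ⟨g, rfl⟩; exact hDp g
  intro hDf
  have hfE : f ∈ Algebra.adjoin (↥P) ({x} : Set K) := by
    rw [← hadj]
    exact hall f
  rw [Algebra.adjoin_singleton_eq_range_aeval] at hfE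
  obtain ⟨q, hq⟩ := hfE
  have hq' : Polynomial.aeval x q = f := hq
  set r := q %ₘ m with hrdef
  have hr : Polynomial.aeval x r = f := by
    have h := Polynomial.modByMonic_add_div q m
    have h2 : Polynomial.aeval x (q %ₘ m + m * (q /ₘ m)) = Polynomial.aeval x q := by rw [h]
    rw [map_add, map_mul, hm_aeval, zero_mul, add_zero] at h2
    exact h2.trans hq'
  have hdeg : r.degree < (p : WithBot ℕ) := by
    have := Polynomial.degree_modByMonic_lt q hm_monic
    rwa [hmdef, Polynomial.degree_X_pow_sub_C hp.pos] at this
  have hnat : r.natDegree < p := by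
    rcases eq_or_ne r 0 with h0 | h0
    · rw [h0]; simpa using hp.pos
    · exact (Polynomial.natDegree_lt_iff_degree_lt h0).2 hdeg
  have hrepr : f = ∑ i ∈ Finset.range p, (r.coeff i : K) * x ^ i := by
    rw [← hr, Polynomial.aeval_eq_sum_range' hnat]
    apply Finset.sum_congr rfl
    intro i _
    rw [Algebra.smul_def]
    rfl
  -- apply D
  rw [hrepr] at hDf
  rw [hDsum p (fun i => (r.coeff i : K) * x ^ i)] at hDf
  have hDf2 : ∑ i ∈ Finset.range p, (r.coeff i : K) * D (x ^ i) = 0 := by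
    rw [← hDf]
    exact Finset.sum_congr rfl fun i _ => (hDterm _ (r.coeff i).2 _).symm
  have hp1 : p - 1 + 1 = p := Nat.succ_pred_eq_of_pos hp.pos
  have hsplit : ∑ n ∈ Finset.range (p - 1), ((r.coeff (n + 1) : K) * D (x ^ (n + 1))) = 0 := by
    have := hDf2
    rw [← hp1, Finset.sum_range_succ'] at this
    simpa [hD1] using this
  have hterm : ∀ n : ℕ, (r.coeff (n+1) : K) * D (x ^ (n + 1))
      = (((n + 1 : ℕ) : K) * (r.coeff (n+1) : K)) * x ^ n := by
    intro n
    rw [hDpow, hx, mul_one]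
    ring
  set w : Fin p → (↥P) := fun j => (((j : ℕ) + 1 : ℕ) : (↥P)) * r.coeff ((j : ℕ) + 1) with hwdef
  have hwzero : ∑ j : Fin p, w j • x ^ (j : ℕ) = 0 := by
    rw [Fin.sum_univ_eq_sum_range (fun n => ((((n : ℕ) + 1 : ℕ) : (↥P)) * r.coeff (n + 1)) • x ^ n) p]
    rw [← hp1, Finset.sum_range_succ]
    have hcp : r.coeff (p - 1 + 1) = 0 := by
      rw [hp1]
      exact Polynomial.coeff_eq_zero_of_natDegree_lt hnat
    rw [hcp]
    simp only [mul_zero, zero_smul, add_zero]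
    rw [← hsplit]
    apply Finset.sum_congr rfl
    intro n _
    rw [hterm n, Algebra.smul_def, map_mul, map_natCast]
    rfl
  have hwz := Fintype.linearIndependent_iff.1 hli w hwzero
  have hcoeffzero : ∀ n : ℕ, 1 ≤ n → n < p → r.coeff n = 0 := by
    intro n h1 h2
    have hj := hwz ⟨n - 1, by omega⟩
    have hn1 : n - 1 + 1 = n := by omega
    rw [hwdef] at hj
    simp only [hn1] at hj
    have hne : ((n : ℕ) : (↥P)) ≠ 0 := by
      intro h0
      have : ((n : ℕ) : K) = 0 := by
        have := congrArg (Subfield.subtype P) h0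
        simpa using this
      rw [CharP.cast_eq_zero_iff K p n] at this
      exact (Nat.not_dvd_of_pos_of_lt (by omega) h2) this
    rcases mul_eq_zero.mp hj with h | h
    · exact absurd h hne
    · exact h
  have hfin : f = (r.coeff 0 : K) := by
    rw [hrepr]
    rw [Finset.sum_eq_single_of_mem 0 (Finset.mem_range.2 hp.pos)]
    · rw [pow_zero, mul_one]
    · intro i hi hne
      rw [hcoeffzero i (by omega) (Finset.mem_range.1 hi)]
      simp
  obtain ⟨g, hg⟩ := (hmemP _).1 (r.coeff 0).2
  exact ⟨g, by rw [hfin, hg]⟩
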